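/- Let k be a positive divisor of a positive integer n. Suppose that for every integer a relatively prime to n with a ≡ 1 (mod k), one has a² ≡ 1 (mod n). Then gcd(n/k, k) divides 2, n/k divides 24, and φ(n)/φ(k) divides 8, where φ denotes Euler's totient function. -/

import Mathlib

lemma key_lemma (n k : ℕ) (hn : 0 < n) (hk : 0 < k) (hkn : k ∣ n)
    (h : ∀ a : ℤ, Int.gcd a (n : ℤ) = 1 → a ≡ 1 [ZMOD (k : ℤ)] → a ^ 2 ≡ 1 [ZMOD (n : ℤ)])
    (p : ℕ) (hp : p.Prime) (u : ℤ) (hu : IsCoprime u (p : ℤ))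
    (huk : ((p : ℤ) ^ (k.factorization p)) ∣ u - 1) :
    ((p : ℤ) ^ (n.factorization p)) ∣ u ^ 2 - 1 := by
  set e := n.factorization p with he
  set f := k.factorization p with hf
  set q : ℕ := ordCompl[p] n with hq
  have hqe : p ^ e * q = n := Nat.ordProj_mul_ordCompl_eq_self n p
  have hcop : Nat.Coprime (p ^ e) q := Nat.coprime_ordCompl hp hn.ne' |>.pow_left _
  have hcopZ : IsCoprime ((p : ℤ) ^ e) (q : ℤ) := by
    rw [← Nat.cast_pow]
    exact Nat.isCoprime_iff_coprime.mpr hcop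
  obtain ⟨x, y, hxy⟩ := hcopZ
  -- a := u + x * p^e * (1 - u)
  set a : ℤ := u + x * (p : ℤ) ^ e * (1 - u) with ha
  have hape : ((p : ℤ) ^ e) ∣ a - u := ⟨x * (1 - u), by ring⟩
  have haq : (q : ℤ) ∣ a - 1 := by
    refine ⟨y * (u - 1), ?_⟩
    have : x * (p : ℤ) ^ e = 1 - y * q := by linarith [hxy]
    rw [ha, this]; ring
  -- a coprime to n
  have hcopa_pe : IsCoprime a ((p : ℤ) ^ e) := by
    have : IsCoprime u ((p : ℤ) ^ e) := hu.pow_right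
    obtain ⟨c, hc⟩ := hape
    rw [sub_eq_iff_eq_add] at hc
    rw [hc, add_comm]
    exact (IsCoprime.add_mul_left_left this c)
  have hcopa_q : IsCoprime a (q : ℤ) := by
    obtain ⟨c, hc⟩ := haq
    rw [sub_eq_iff_eq_add] at hc
    rw [hc, add_comm]
    exact (IsCoprime.add_mul_left_left isCoprime_one_left c)
  have hcopan : Int.gcd a (n : ℤ) = 1 := by
    rw [Int.isCoprime_iff_gcd_eq_one.symm, ← hqe]
    push_cast
    exact hcopa_pe.mul_right hcopa_q
  -- a ≡ 1 mod k
  have hfe : f ≤ e := (Nat.factorization_le_iff_dvd hk.ne' hn.ne').mpr hkn p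
  have hk' : k = p ^ f * ordCompl[p] k := (Nat.ordProj_mul_ordCompl_eq_self k p).symm
  have hpf_dvd : ((p : ℤ) ^ f) ∣ a - 1 := by
    have h1 : ((p : ℤ) ^ f) ∣ a - u := dvd_trans (pow_dvd_pow _ hfe) hape
    have := dvd_add h1 huk
    simpa using this
  have hk'_dvd_q : (ordCompl[p] k : ℤ) ∣ (q : ℤ) := by
    exact_mod_cast Int.natCast_dvd_natCast.mpr
      (Nat.ordCompl_dvd_ordCompl_of_dvd hkn p)
  have hk'_dvd : (ordCompl[p] k : ℤ) ∣ a - 1 := hk'_dvd_q.trans haq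
  have hcpk : IsCoprime ((p : ℤ) ^ f) (ordCompl[p] k : ℤ) := by
    rw [← Nat.cast_pow]
    exact Nat.isCoprime_iff_coprime.mpr ((Nat.coprime_ordCompl hp hk.ne').pow_left _)
  have hak : a ≡ 1 [ZMOD (k : ℤ)] := by
    have : (k : ℤ) ∣ a - 1 := by
      rw [hk']
      push_cast
      exact hcpk.mul_dvd hpf_dvd hk'_dvd
    exact Int.ModEq.symm (Int.modEq_iff_dvd.mpr (by simpa using this))
  have := h a hcopan hak
  have hn_dvd : (n : ℤ) ∣ a ^ 2 - 1 := Int.ModEq.dvd this.symm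
  have hpe_dvd_n : ((p : ℤ) ^ e) ∣ (n : ℤ) := by
    exact_mod_cast Int.natCast_dvd_natCast.mpr (Nat.ordProj_dvd n p)
  have h1 : ((p : ℤ) ^ e) ∣ a ^ 2 - 1 := hpe_dvd_n.trans hn_dvd
  have h2 : ((p : ℤ) ^ e) ∣ a ^ 2 - u ^ 2 := by
    have : a ^ 2 - u ^ 2 = (a - u) * (a + u) := by ring
    rw [this]
    exact hape.mul_right _
  have := h1.sub h2
  simpa using this

section facts
variable (n k : ℕ) (hn : 0 < n) (hk : 0 < k) (hkn : k ∣ n)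
    (h : ∀ a : ℤ, Int.gcd a (n : ℤ) = 1 → a ≡ 1 [ZMOD (k : ℤ)] → a ^ 2 ≡ 1 [ZMOD (n : ℤ)])

include hn hk hkn h

lemma fact_odd_pos (p : ℕ) (hp : p.Prime) (hp2 : p ≠ 2) (hf : 1 ≤ k.factorization p) :
    n.factorization p = k.factorization p := by
  set e := n.factorization p with he
  set f := k.factorization p with hf'
  have hfe : f ≤ e := (Nat.factorization_le_iff_dvd hk.ne' hn.ne').mpr hkn p
  have hu : IsCoprime (1 + (p : ℤ) ^ f) (p : ℤ) := by
    have : (1 : ℤ) + (p : ℤ) ^ f = 1 + (p : ℤ) * (p : ℤ) ^ (f - 1) := by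
      rw [← pow_succ', Nat.sub_add_cancel hf]
    rw [this]
    exact IsCoprime.add_mul_left_left isCoprime_one_left _
  have hkey := key_lemma n k hn hk hkn h p hp (1 + (p : ℤ) ^ f) hu (by simp [hf'])
  have hconc : ((p : ℤ) ^ e) ∣ (p : ℤ) ^ f * (2 + (p : ℤ) ^ f) := by
    have : (1 + (p : ℤ) ^ f) ^ 2 - 1 = (p : ℤ) ^ f * (2 + (p : ℤ) ^ f) := by ring
    rwa [this] at hkey
  by_contra hne
  have hlt : f + 1 ≤ e := by omega
  have h2 : ((p : ℤ) ^ (f + 1)) ∣ (p : ℤ) ^ f * (2 + (p : ℤ) ^ f) :=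
    (pow_dvd_pow _ hlt).trans hconc
  rw [pow_succ] at h2
  have h3 : (p : ℤ) ∣ 2 + (p : ℤ) ^ f := by
    have hpne : ((p : ℤ) ^ f) ≠ 0 := pow_ne_zero _ (by exact_mod_cast hp.pos.ne')
    exact (mul_dvd_mul_iff_left hpne).mp h2
  have h4 : (p : ℤ) ∣ 2 := by
    have : (p : ℤ) ∣ (p : ℤ) ^ f := dvd_pow_self _ (by omega)
    simpa using h3.sub this
  have : p ∣ 2 := by exact_mod_cast h4
  exact hp2 ((Nat.prime_dvd_prime_iff_eq hp Nat.prime_two).mp this)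

lemma fact_odd_zero (p : ℕ) (hp : p.Prime) (hp2 : p ≠ 2) (hf : k.factorization p = 0) :
    p ^ n.factorization p ∣ 3 := by
  have hu : IsCoprime (2 : ℤ) (p : ℤ) := by
    rw [Int.isCoprime_iff_gcd_eq_one]
    have : Nat.Coprime 2 p := (Nat.coprime_primes Nat.prime_two hp).mpr (Ne.symm hp2)
    simpa [Int.gcd] using this
  have hkey := key_lemma n k hn hk hkn h p hp 2 hu (by simp [hf])
  have : ((p : ℤ) ^ n.factorization p) ∣ 3 := by norm_num at hkey; convert hkey using 1
  exact_mod_cast this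

lemma fact_two_small (hf : k.factorization 2 ≤ 1) : n.factorization 2 ≤ 3 := by
  have hu : IsCoprime (3 : ℤ) (2 : ℤ) := by norm_num
  have huk : ((2 : ℤ) ^ (k.factorization 2)) ∣ 3 - 1 := by
    interval_cases (k.factorization 2) <;> norm_num
  have hkey := key_lemma n k hn hk hkn h 2 Nat.prime_two 3 (by exact_mod_cast hu) (by exact_mod_cast huk)
  have h8 : ((2 : ℤ) ^ n.factorization 2) ∣ 8 := by norm_num at hkey; convert hkey using 1
  have : (2 : ℕ) ^ n.factorization 2 ∣ 8 := by exact_mod_cast h8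
  have := Nat.le_of_dvd (by norm_num) this
  by_contra hc
  have : 2 ^ 4 ≤ 2 ^ n.factorization 2 := Nat.pow_le_pow_right (by norm_num) (by omega)
  omega

lemma fact_two_big (hf : 2 ≤ k.factorization 2) :
    n.factorization 2 ≤ k.factorization 2 + 1 := by
  set e := n.factorization 2 with he
  set f := k.factorization 2 with hf'
  have hu : IsCoprime (1 + (2 : ℤ) ^ f) (2 : ℤ) := by
    have : (1 : ℤ) + (2 : ℤ) ^ f = 1 + (2 : ℤ) * (2 : ℤ) ^ (f - 1) := by
      rw [← pow_succ', Nat.sub_add_cancel (by omega : 1 ≤ f)]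
    rw [this]
    exact IsCoprime.add_mul_left_left isCoprime_one_left _
  have hkey := key_lemma n k hn hk hkn h 2 Nat.prime_two (1 + (2 : ℤ) ^ f)
    (by exact_mod_cast hu) (by push_cast; simp [hf'])
  have hconc : ((2 : ℤ) ^ e) ∣ (2 : ℤ) ^ (f + 1) * (1 + (2 : ℤ) ^ (f - 1)) := by
    have h1 : (1 + (2 : ℤ) ^ f) ^ 2 - 1 = (2 : ℤ) ^ (f+1) * (1 + (2 : ℤ) ^ (f-1)) := by
      have : f = (f - 1) + 1 := by omega
      rw [this]
      push_cast
      ring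
    push_cast at hkey
    rwa [h1] at hkey
  by_contra hne
  have hlt : f + 2 ≤ e := by omega
  have h2 : ((2 : ℤ) ^ (f + 2)) ∣ (2 : ℤ) ^ (f + 1) * (1 + (2 : ℤ) ^ (f - 1)) :=
    (pow_dvd_pow _ hlt).trans hconc
  rw [pow_succ] at h2
  have h3 : (2 : ℤ) ∣ 1 + (2 : ℤ) ^ (f - 1) := by
    have hpne : ((2 : ℤ) ^ (f + 1)) ≠ 0 := by positivity
    exact (mul_dvd_mul_iff_left hpne).mp h2
  have h4 : (2 : ℤ) ∣ 1 := by
    have : (2 : ℤ) ∣ (2 : ℤ) ^ (f - 1) := dvd_pow_self _ (by omega)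
    simpa using h3.sub this
  norm_num at h4

end facts

/-- Let `k` be a positive divisor of a positive integer `n` such that every integer `a`
coprime to `n` with `a ≡ 1 (mod k)` satisfies `a² ≡ 1 (mod n)`.  Then `gcd(n/k, k) ∣ 2`,
`n/k ∣ 24` and `φ(n)/φ(k) ∣ 8`. -/
theorem totient_quotient_dvd (n k : ℕ) (hn : 0 < n) (hk : 0 < k) (hkn : k ∣ n)
    (h : ∀ a : ℤ, Int.gcd a (n : ℤ) = 1 → a ≡ 1 [ZMOD (k : ℤ)] → a ^ 2 ≡ 1 [ZMOD (n : ℤ)]) :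
    Nat.gcd (n / k) k ∣ 2 ∧ (n / k) ∣ 24 ∧ (Nat.totient n / Nat.totient k) ∣ 8 := by
  have hm : 0 < n / k := Nat.div_pos (Nat.le_of_dvd hn hkn) hk
  have hle : ∀ p, k.factorization p ≤ n.factorization p := fun p =>
    (Nat.factorization_le_iff_dvd hk.ne' hn.ne').mpr hkn p
  -- consolidated per-prime facts
  have hF1 : ∀ p, p ≠ 2 → p ≠ 3 → n.factorization p = k.factorization p := by
    intro p hp2 hp3
    by_cases hp : p.Prime
    · rcases Nat.eq_zero_or_pos (k.factorization p) with hf | hf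
      · have h3 := fact_odd_zero n k hn hk hkn h p hp hp2 hf
        rcases Nat.eq_zero_or_pos (n.factorization p) with he | he
        · omega
        · exfalso
          have hpd : p ∣ 3 := dvd_trans (dvd_pow_self p he.ne') h3
          have := (Nat.prime_dvd_prime_iff_eq hp (by norm_num)).mp hpd
          exact hp3 this
      · exact fact_odd_pos n k hn hk hkn h p hp hp2 hf
    · rw [Nat.factorization_eq_zero_of_not_prime n hp,
        Nat.factorization_eq_zero_of_not_prime k hp]
  have hF3a : 1 ≤ k.factorization 3 → n.factorization 3 = k.factorization 3 :=
    fun hf => fact_odd_pos n k hn hk hkn h 3 (by norm_num) (by norm_num) hf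
  have hF3b : k.factorization 3 = 0 → n.factorization 3 ≤ 1 := by
    intro hf
    have h3 := fact_odd_zero n k hn hk hkn h 3 (by norm_num) (by norm_num) hf
    by_contra hc
    have : (3:ℕ) ^ 2 ≤ 3 ^ n.factorization 3 := Nat.pow_le_pow_right (by norm_num) (by omega)
    have := Nat.le_of_dvd (by norm_num) h3
    omega
  have hF2a : k.factorization 2 ≤ 1 → n.factorization 2 ≤ 3 :=
    fun hf => fact_two_small n k hn hk hkn h hf
  have hF2b : 2 ≤ k.factorization 2 → n.factorization 2 ≤ k.factorization 2 + 1 :=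
    fun hf => fact_two_big n k hn hk hkn h hf
  have hdivfac : (n / k).factorization = n.factorization - k.factorization :=
    Nat.factorization_div hkn
  refine ⟨?_, ?_, ?_⟩
  · -- gcd (n/k) k ∣ 2
    rw [← Nat.factorization_le_iff_dvd (Nat.gcd_pos_of_pos_left k hm).ne' (by norm_num)]
    intro p
    rw [Nat.factorization_gcd hm.ne' hk.ne', Finsupp.inf_apply, hdivfac, Finsupp.tsub_apply]
    have h2f : (2:ℕ).factorization p = if p = 2 then 1 else 0 := by
      rw [Nat.Prime.factorization Nat.prime_two, Finsupp.single_apply]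
      simp [eq_comm]
    rw [h2f]
    rcases eq_or_ne p 2 with rfl | hp2
    · rw [if_pos rfl]
      rcases Nat.lt_or_ge (k.factorization 2) 2 with hf | hf
      · have := hF2a (by omega)
        omega
      · have := hF2b hf
        omega
    · rw [if_neg hp2]
      rcases eq_or_ne p 3 with rfl | hp3
      · rcases Nat.eq_zero_or_pos (k.factorization 3) with hf | hf
        · omega
        · have := hF3a hf; omega
      · have := hF1 p hp2 hp3; omega
  · -- n/k ∣ 24
    rw [← Nat.factorization_le_iff_dvd hm.ne' (by norm_num)]
    intro p
    rw [hdivfac, Finsupp.tsub_apply]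
    have h24f : (24:ℕ).factorization p = if p = 2 then 3 else if p = 3 then 1 else 0 := by
      have : (24:ℕ) = 2 ^ 3 * 3 := by norm_num
      rw [this, Nat.factorization_mul (by norm_num) (by norm_num),
        Nat.factorization_pow, Nat.Prime.factorization Nat.prime_two,
        Nat.Prime.factorization (by norm_num : Nat.Prime 3)]
      simp only [Finsupp.coe_add, Finsupp.coe_smul, Pi.add_apply, Pi.smul_apply,
        Finsupp.single_apply, smul_eq_mul]
      split_ifs <;> omega
    rw [h24f]
    rcases eq_or_ne p 2 with rfl | hp2
    · rw [if_pos rfl]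
      rcases Nat.lt_or_ge (k.factorization 2) 2 with hf | hf
      · have := hF2a (by omega); omega
      · have := hF2b hf; omega
    · rw [if_neg hp2]
      rcases eq_or_ne p 3 with rfl | hp3
      · rw [if_pos rfl]
        rcases Nat.eq_zero_or_pos (k.factorization 3) with hf | hf
        · have := hF3b hf; omega
        · have := hF3a hf; omega
      · rw [if_neg hp3]
        have := hF1 p hp2 hp3; omega
  · -- totient ratio divides 8
    have hφk_dvd : k.totient ∣ n.totient := Nat.totient_dvd_of_dvd hkn
    have hφk_pos : 0 < k.totient := Nat.totient_pos.mpr hk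
    suffices hdvd : n.totient ∣ 8 * k.totient by
      have heq : (n.totient / k.totient) * k.totient = n.totient := Nat.div_mul_cancel hφk_dvd
      have h2 : (n.totient / k.totient) * k.totient ∣ 8 * k.totient := by rw [heq]; exact hdvd
      exact (Nat.mul_dvd_mul_iff_right hφk_pos).mp h2
    set c : ℕ → ℕ := fun p => if p = 2 then 4 else if p = 3 then 2 else 1 with hc
    have hsub : k.primeFactors ⊆ n.primeFactors := Nat.primeFactors_mono hkn hn.ne'
    have hgen : ∀ j : ℕ, 0 < j → j.totient = ∏ p ∈ j.primeFactors, (p ^ j.factorization p).totient := by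
      intro j hj
      rw [Nat.totient_eq_prod_factorization hj.ne', Finsupp.prod, Nat.support_factorization]
      refine Finset.prod_congr rfl fun p hp => ?_
      rw [Nat.totient_prime_pow (Nat.prime_of_mem_primeFactors hp)
        ((Nat.prime_of_mem_primeFactors hp).factorization_pos_of_dvd hj.ne'
          (Nat.dvd_of_mem_primeFactors hp))]
    have hφn : n.totient = ∏ p ∈ n.primeFactors, (p ^ n.factorization p).totient := hgen n hn
    have hφk : k.totient = ∏ p ∈ n.primeFactors, (p ^ k.factorization p).totient := by
      rw [hgen k hk]
      refine Finset.prod_subset hsub fun p _ hnp => ?_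
      have hz : k.factorization p = 0 := by
        rwa [← Nat.support_factorization, Finsupp.notMem_support_iff] at hnp
      simp [hz]
    have hper : ∀ p ∈ n.primeFactors,
        (p ^ n.factorization p).totient ∣ c p * (p ^ k.factorization p).totient := by
      intro p hp
      have hpp := Nat.prime_of_mem_primeFactors hp
      have hep : 0 < n.factorization p :=
        hpp.factorization_pos_of_dvd hn.ne' (Nat.dvd_of_mem_primeFactors hp)
      rcases eq_or_ne p 2 with rfl | hp2
      · rcases Nat.lt_or_ge (k.factorization 2) 2 with hf | hf
        · have he3 := hF2a (by omega)
          have hφf : ((2:ℕ) ^ k.factorization 2).totient = 1 := by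
            interval_cases (k.factorization 2) <;> simp
          rw [hφf, mul_one, Nat.totient_prime_pow Nat.prime_two hep]
          have hd : (2:ℕ) ^ (n.factorization 2 - 1) ∣ 2 ^ 2 :=
            pow_dvd_pow _ (by omega)
          simpa [hc] using hd
        · have hef := hF2b hf
          rw [Nat.totient_prime_pow Nat.prime_two hep,
            Nat.totient_prime_pow Nat.prime_two (by omega)]
          have h4 : c 2 * (2 ^ (k.factorization 2 - 1) * (2 - 1))
              = 2 ^ (k.factorization 2 + 1) := by
            have he : k.factorization 2 + 1 = 2 + (k.factorization 2 - 1) := by omega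
            simp only [hc, if_pos rfl]
            rw [he, pow_add]
            norm_num
          rw [h4]
          have : n.factorization 2 - 1 ≤ k.factorization 2 + 1 := by omega
          simpa using pow_dvd_pow 2 this
      · rcases eq_or_ne p 3 with rfl | hp3
        · rcases Nat.eq_zero_or_pos (k.factorization 3) with hf | hf
          · have he1 : n.factorization 3 = 1 := by have := hF3b hf; omega
            rw [he1, hf]
            simp [hc, Nat.totient_prime (by norm_num : Nat.Prime 3)]
          · rw [hF3a hf]
            exact Dvd.intro_left _ rfl
        · rw [hF1 p hp2 hp3]
          simp [hc, hp2, hp3]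
    have hprod : (∏ p ∈ n.primeFactors, c p) ∣ 8 := by
      have h1 : ∏ p ∈ n.primeFactors, c p = ∏ p ∈ n.primeFactors ∩ {2, 3}, c p := by
        refine (Finset.prod_subset Finset.inter_subset_left fun p hp hnp => ?_).symm
        have hq : p ∉ ({2, 3} : Finset ℕ) := fun hm2 => hnp (Finset.mem_inter.mpr ⟨hp, hm2⟩)
        simp only [Finset.mem_insert, Finset.mem_singleton] at hq
        push_neg at hq
        simp [hc, hq.1, hq.2]
      rw [h1]
      have h2 : ∏ p ∈ n.primeFactors ∩ {2, 3}, c p ∣ ∏ p ∈ ({2, 3} : Finset ℕ), c p :=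
        Finset.prod_dvd_prod_of_subset _ _ _ Finset.inter_subset_right
      have h3 : ∏ p ∈ ({2, 3} : Finset ℕ), c p = 8 := by
        rw [Finset.prod_insert (by norm_num), Finset.prod_singleton]
        simp [hc]
      rwa [h3] at h2
    rw [hφn, hφk]
    calc ∏ p ∈ n.primeFactors, (p ^ n.factorization p).totient
        ∣ ∏ p ∈ n.primeFactors, (c p * (p ^ k.factorization p).totient) :=
          Finset.prod_dvd_prod_of_dvd _ _ hper
      _ = (∏ p ∈ n.primeFactors, c p) * ∏ p ∈ n.primeFactors, (p ^ k.factorization p).totient :=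
          Finset.prod_mul_distrib
      _ ∣ 8 * ∏ p ∈ n.primeFactors, (p ^ k.factorization p).totient :=
          mul_dvd_mul_right hprod _
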